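/- The language of a totally rigid acyclic tree grammar is finite. -/

import Mathlib

open FirstOrder Language

namespace RigidGrammars

variable {L : FirstOrder.Language} {N : Type}

/-- One-step derivation relation of a tree grammar: replace one occurrence of a
non-terminal by the right-hand side of a production. -/
inductive Deriv1 (P : Set (N × L.Term N)) : L.Term N → L.Term N → Prop
  | head {β : N} {t : L.Term N} : (β, t) ∈ P → Deriv1 P (Term.var β) t
  | func {l : ℕ} (f : L.Functions l) (ts ts' : Fin l → L.Term N) (i : Fin l) :
      Deriv1 P (ts i) (ts' i) → (∀ j, j ≠ i → ts' j = ts j) →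
      Deriv1 P (Term.func f ts) (Term.func f ts')

/-- The subterm of a term at a position (a list of argument indices), if defined. -/
def subtermAt : L.Term N → List ℕ → Option (L.Term N)
  | t, [] => some t
  | Term.var _, _ :: _ => none
  | Term.func (l := l) _ ts, i :: p => if h : i < l then subtermAt (ts ⟨i, h⟩) p else none

/-- The non-terminal `β` occurs in the term `t`. -/
def Occurs (β : N) (t : L.Term N) : Prop :=
  ∃ p : List ℕ, subtermAt t p = some (Term.var β)

/-- A rigid tree grammar: non-terminals `N`, rigid non-terminals `NR`, start symbol,
and a finite set of productions. -/
structure RTG (L : FirstOrder.Language) (N : Type) where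
  start : N
  NR : Set N
  P : Set (N × L.Term N)
  finP : P.Finite

/-- Totally rigid: all non-terminals are rigid. -/
def TotallyRigid (G : RTG L N) : Prop := G.NR = Set.univ

/-- Acyclic: there is no derivation `β →¹ … →¹ t` (of at least one step) with
`β` occurring in `t`. -/
def Acyclic (G : RTG L N) : Prop :=
  ¬ ∃ (β : N) (d : List (L.Term N)) (t : L.Term N),
      List.Chain (Deriv1 G.P) (Term.var β) (d ++ [t]) ∧ Occurs β t

/-- A derivation (in the underlying regular grammar) of the term `t` from the start
symbol, satisfying the rigidity condition: two occurrences of a rigid non-terminal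
anywhere in the derivation yield identical subterms of the derived term `t`. -/
def RigidDeriv (G : RTG L N) (d : List (L.Term N)) (t : L.Term N) : Prop :=
  d.Chain' (Deriv1 G.P) ∧ d.head? = some (Term.var G.start) ∧ d.getLast? = some t ∧
  ∀ β ∈ G.NR, ∀ u ∈ d, ∀ u' ∈ d, ∀ p q : List ℕ,
    subtermAt u p = some (Term.var β) → subtermAt u' q = some (Term.var β) →
    subtermAt t p = subtermAt t q

/-- The language of a rigid tree grammar: the ground terms derivable from the start
symbol under the rigidity condition. -/
def RigidLang (G : RTG L N) : Set (L.Term Empty) :=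
  { t | ∃ d : List (L.Term N), RigidDeriv G d (t.relabel (fun x : Empty => x.elim)) }

end RigidGrammars

open RigidGrammars

namespace RigidAux

open RigidGrammars

attribute [local instance] Classical.propDecidable

variable {L : FirstOrder.Language} {N : Type}

/-- Weighted count of non-terminal occurrences. -/
def M (w : N → ℕ) : L.Term N → ℕ
  | .var β => w β
  | .func _ ts => ∑ i, M w (ts i)

lemma occurs_var (β : N) : Occurs β (Term.var β : L.Term N) := ⟨[], rfl⟩

lemma occurs_func {β : N} {l : ℕ} (f : L.Functions l) (ts : Fin l → L.Term N) (i : Fin l)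
    (h : Occurs β (ts i)) : Occurs β (Term.func f ts) := by
  obtain ⟨p, hp⟩ := (h : ∃ p, subtermAt (ts i) p = some (Term.var β))
  refine ⟨(i : ℕ) :: p, ?_⟩
  rw [subtermAt, dif_pos i.isLt]
  simpa using hp

lemma M_congr {w w' : N → ℕ} : ∀ {t : L.Term N},
    (∀ β, Occurs β t → w β = w' β) → M w t = M w' t
  | .var β, h => h β (occurs_var β)
  | .func f ts, h => by
      simp only [M]
      exact Finset.sum_congr rfl fun i _ => M_congr (fun β hβ => h β (occurs_func f ts i hβ))

lemma M_lt_of_deriv1 {P : Set (N × L.Term N)} {w : N → ℕ}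
    (hw : ∀ q ∈ P, M w q.2 < w q.1) :
    ∀ {s t : L.Term N}, Deriv1 P s t → M w t < M w s := by
  intro s t h
  induction h with
  | head hmem => exact hw _ hmem
  | func f ts ts' i hstep hother ih =>
      simp only [M]
      refine Finset.sum_lt_sum (fun j _ => ?_) ⟨i, Finset.mem_univ i, ih⟩
      by_cases hj : j = i
      · subst hj; exact le_of_lt ih
      · rw [hother j hj]

lemma subtermAt_append (p : List ℕ) : ∀ {t u : L.Term N} (q : List ℕ) {s : L.Term N},
    subtermAt t p = some u → subtermAt u q = some s → subtermAt t (p ++ q) = some s := by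
  induction p with
  | nil =>
      intro t u q s h1 h2
      rw [subtermAt] at h1
      obtain rfl : t = u := by injection h1
      exact h2
  | cons i p ih =>
      intro t u q s h1 h2
      cases t with
      | var a => rw [subtermAt] at h1; exact absurd h1 (by simp)
      | func f ts =>
          rw [subtermAt] at h1
          rw [List.cons_append, subtermAt]
          split at h1
          · rename_i hlt
            rw [dif_pos hlt]
            exact ih q h1 h2
          · exact absurd h1 (by simp)

lemma deriv1_of_subterm {P : Set (N × L.Term N)} {γ : N} {u : L.Term N} (hu : (γ, u) ∈ P) :
    ∀ (p : List ℕ) (t : L.Term N), subtermAt t p = some (Term.var γ) →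
      ∃ t', Deriv1 P t t' ∧ subtermAt t' p = some u := by
  intro p
  induction p with
  | nil =>
      intro t h
      rw [subtermAt] at h
      obtain rfl : t = Term.var γ := by injection h
      exact ⟨u, Deriv1.head hu, by rw [subtermAt]⟩
  | cons i p ih =>
      intro t h
      cases t with
      | var a => rw [subtermAt] at h; exact absurd h (by simp)
      | func f ts =>
          rw [subtermAt] at h
          split at h
          · rename_i hlt
            obtain ⟨s', hd, hs⟩ := ih _ h
            refine ⟨Term.func f (Function.update ts ⟨i, hlt⟩ s'), ?_, ?_⟩
            · refine Deriv1.func f ts _ ⟨i, hlt⟩ ?_ (fun j hj => Function.update_of_ne hj _ _)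
              rw [Function.update_self]
              exact hd
            · rw [subtermAt, dif_pos hlt, Function.update_self]
              exact hs
          · exact absurd h (by simp)

/-- The dependency relation between non-terminals. -/
def Rrel (P : Set (N × L.Term N)) (β γ : N) : Prop := ∃ u, (β, u) ∈ P ∧ Occurs γ u

lemma transGen_chain {P : Set (N × L.Term N)} {β γ : N}
    (h : Relation.TransGen (Rrel P) β γ) :
    ∃ (d : List (L.Term N)) (t : L.Term N),
      List.Chain (Deriv1 P) (Term.var β) (d ++ [t]) ∧ Occurs γ t := by
  induction h with
  | single hr =>
      obtain ⟨u, hu, hocc⟩ := hr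
      exact ⟨[], u, List.Chain.cons (Deriv1.head hu) List.Chain.nil, hocc⟩
  | tail _ hr ih =>
      obtain ⟨d, t, hchain, hocc⟩ := ih
      obtain ⟨p, hp⟩ := (hocc : ∃ p, subtermAt t p = some (Term.var _))
      obtain ⟨u, hu, hoccu⟩ := hr
      obtain ⟨q, hq⟩ := (hoccu : ∃ q, subtermAt u q = some (Term.var _))
      obtain ⟨t', hd, ht'⟩ := deriv1_of_subterm hu p t hp
      refine ⟨d ++ [t], t', ?_, p ++ q, subtermAt_append p q ht' hq⟩
      have heq : (d ++ [t]) ++ [t'] = d ++ (t :: [t']) := by simp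
      rw [heq]
      refine List.isChain_cons_split.2 ?_
      exact ⟨hchain, List.Chain.cons hd List.Chain.nil⟩

lemma irrefl_transGen {G : RTG L N} (hac : Acyclic G) (β : N) :
    ¬ Relation.TransGen (Rrel G.P) β β := by
  intro h
  obtain ⟨d, t, hchain, hocc⟩ := transGen_chain h
  exact hac ⟨β, d, t, hchain, hocc⟩

/-- A weight function on non-terminals, defined by well-founded recursion on the
dependency relation. -/
noncomputable def weight (G : RTG L N)
    (wf : WellFounded (fun γ β => Relation.TransGen (Rrel G.P) β γ)) : N → ℕ :=
  wf.fix (fun β rec =>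
    1 + ∑ q ∈ G.finP.toFinset.filter (fun q => q.1 = β),
      M (fun γ => if h : Rrel G.P β γ then rec γ (Relation.TransGen.single h) else 0) q.2)

lemma weight_eq (G : RTG L N)
    (wf : WellFounded (fun γ β => Relation.TransGen (Rrel G.P) β γ)) (β : N) :
    weight G wf β = 1 + ∑ q ∈ G.finP.toFinset.filter (fun q => q.1 = β),
      M (fun γ => if _ : Rrel G.P β γ then weight G wf γ else 0) q.2 := by
  rw [weight, WellFounded.fix_eq]

lemma M_weight_lt {G : RTG L N}
    (wf : WellFounded (fun γ β => Relation.TransGen (Rrel G.P) β γ))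
    {β : N} {u : L.Term N} (h : (β, u) ∈ G.P) :
    M (weight G wf) u < weight G wf β := by
  rw [weight_eq]
  have hcongr : M (weight G wf) u
      = M (fun γ => if _ : Rrel G.P β γ then weight G wf γ else 0) u := by
    refine M_congr (fun γ hγ => ?_)
    rw [dif_pos ⟨u, h, hγ⟩]
  have hmem : (β, u) ∈ G.finP.toFinset.filter (fun q => q.1 = β) :=
    Finset.mem_filter.2 ⟨G.finP.mem_toFinset.2 h, rfl⟩
  have hle := Finset.single_le_sum
    (f := fun q : N × L.Term N =>
      M (fun γ => if _ : Rrel G.P β γ then weight G wf γ else 0) q.2)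
    (fun q _ => Nat.zero_le _) hmem
  calc M (weight G wf) u
      = M (fun γ => if _ : Rrel G.P β γ then weight G wf γ else 0) u := hcongr
    _ ≤ _ := hle
    _ < 1 + _ := Nat.lt_one_add_iff.2 le_rfl

lemma succ_finite {P : Set (N × L.Term N)} (hP : P.Finite) (t : L.Term N) :
    {t' | Deriv1 P t t'}.Finite := by
  induction t with
  | var β =>
      refine Set.Finite.subset (hP.image Prod.snd) ?_
      rintro t' ht'
      cases ht' with
      | head hmem => exact ⟨(β, t'), hmem, rfl⟩
  | func f ts ih =>
      refine Set.Finite.subset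
        (Set.finite_iUnion (fun i =>
          ((ih i).image (fun s => Term.func f (Function.update ts i s))))) ?_
      rintro t' ht'
      cases ht' with
      | func _ _ ts' i hstep hother =>
          refine Set.mem_iUnion.2 ⟨i, ⟨ts' i, hstep, ?_⟩⟩
          show Term.func f (Function.update ts i (ts' i)) = Term.func f ts'
          congr 1
          funext j
          by_cases hj : j = i
          · subst hj; rw [Function.update_self]
          · rw [Function.update_of_ne hj, hother j hj]

/-- Terms reachable from `start` in at most `k` steps. -/
def ReachIn (P : Set (N × L.Term N)) (start : L.Term N) : ℕ → Set (L.Term N)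
  | 0 => {start}
  | k + 1 => ReachIn P start k ∪ {t' | ∃ t ∈ ReachIn P start k, Deriv1 P t t'}

lemma reachIn_finite {P : Set (N × L.Term N)} (hP : P.Finite) (start : L.Term N) :
    ∀ k, (ReachIn P start k).Finite
  | 0 => Set.finite_singleton _
  | k + 1 => by
      have h1 := reachIn_finite hP start k
      refine h1.union (Set.Finite.subset (h1.biUnion (fun t _ => succ_finite hP t)) ?_)
      rintro x ⟨t, ht, hd⟩
      exact Set.mem_biUnion ht hd

lemma reachIn_mono {P : Set (N × L.Term N)} {start : L.Term N} {k m : ℕ} (h : k ≤ m) :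
    ReachIn P start k ⊆ ReachIn P start m := by
  induction h with
  | refl => exact subset_rfl
  | step _ ih => exact ih.trans Set.subset_union_left

lemma chain_last_mem {P : Set (N × L.Term N)} {start : L.Term N} :
    ∀ (l : List (L.Term N)) (a : L.Term N) (k : ℕ),
    List.Chain (Deriv1 P) a l → a ∈ ReachIn P start k →
    (a :: l).getLast (List.cons_ne_nil a l) ∈ ReachIn P start (k + l.length) := by
  intro l
  induction l with
  | nil => intro a k _ ha; simpa using ha
  | cons b l ih =>
      intro a k hch ha
      replace hch : Deriv1 P a b ∧ List.Chain (Deriv1 P) b l := List.isChain_cons_cons.1 hch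
      have hb : b ∈ ReachIn P start (k + 1) := Or.inr ⟨a, ha, hch.1⟩
      have := ih b (k + 1) hch.2 hb
      rw [List.getLast_cons (List.cons_ne_nil b l)]
      convert this using 2
      simp [Nat.add_comm, Nat.add_assoc, Nat.add_left_comm]

lemma chain_length_le {P : Set (N × L.Term N)} {w : N → ℕ}
    (hw : ∀ q ∈ P, M w q.2 < w q.1) :
    ∀ (l : List (L.Term N)) (a : L.Term N), List.Chain (Deriv1 P) a l → l.length ≤ M w a := by
  intro l
  induction l with
  | nil => intro a _; exact Nat.zero_le _
  | cons b l ih =>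
      intro a hch
      replace hch : Deriv1 P a b ∧ List.Chain (Deriv1 P) b l := List.isChain_cons_cons.1 hch
      have h1 : M w b < M w a := M_lt_of_deriv1 hw hch.1
      have h2 := ih b hch.2
      simpa [List.length_cons] using Nat.succ_le_of_lt (lt_of_le_of_lt h2 h1)

lemma relabel_inj : ∀ {t₁ t₂ : L.Term Empty},
    t₁.relabel (fun x : Empty => (x.elim : N)) = t₂.relabel (fun x : Empty => (x.elim : N)) →
    t₁ = t₂ := by
  intro t₁
  induction t₁ with
  | var a => exact a.elim
  | func f ts ih =>
      intro t₂ h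
      cases t₂ with
      | var a => exact a.elim
      | func g ss =>
          simp only [Term.relabel] at h
          injection h with h1 h2 h3
          subst h1
          obtain rfl := eq_of_heq h2
          congr 1
          funext i
          exact ih i (congrFun (eq_of_heq h3) i)

end RigidAux

open RigidAux

/-- The language of a totally rigid acyclic tree grammar is finite. -/
theorem totally_rigid_acyclic_lang_finite
    (L : FirstOrder.Language) (N : Type) [Fintype N]
    (G : RTG L N) (htr : TotallyRigid G) (hac : Acyclic G) :
    (RigidLang G).Finite := by
  classical
  haveI : IsTrans N (fun γ β => Relation.TransGen (Rrel G.P) β γ) :=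
    ⟨fun _ _ _ h1 h2 => h2.trans h1⟩
  haveI : IsIrrefl N (fun γ β => Relation.TransGen (Rrel G.P) β γ) :=
    ⟨irrefl_transGen hac⟩
  have wf : WellFounded (fun γ β => Relation.TransGen (Rrel G.P) β γ) :=
    Finite.wellFounded_of_trans_of_irrefl _
  set w := weight G wf with hwdef
  have hw : ∀ q ∈ G.P, M w q.2 < w q.1 := by
    rintro ⟨β, u⟩ hq
    exact M_weight_lt wf hq
  set K := M w (Term.var G.start) with hKdef
  have hfin : (ReachIn G.P (Term.var G.start) K).Finite := reachIn_finite G.finP _ K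
  have hinj : Set.InjOn (fun t : L.Term Empty => t.relabel (fun x : Empty => (x.elim : N)))
      ((fun t : L.Term Empty => t.relabel (fun x : Empty => (x.elim : N))) ⁻¹'
        ReachIn G.P (Term.var G.start) K) :=
    fun a _ b _ hab => relabel_inj hab
  refine Set.Finite.subset (hfin.preimage hinj) ?_
  intro t ht
  obtain ⟨d, hch, hhead, hlast, -⟩ := ht
  cases d with
  | nil => simp at hhead
  | cons a l =>
      obtain rfl : a = Term.var G.start := by
        simpa using hhead
      have hch' : List.Chain (Deriv1 G.P) (Term.var G.start) l := hch
      have hlen : l.length ≤ K := chain_length_le hw l _ hch'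
      have hmem0 : Term.var G.start ∈ ReachIn G.P (Term.var G.start) 0 := rfl
      have hlastmem := chain_last_mem l (Term.var G.start) 0 hch' hmem0
      rw [List.getLast?_eq_getLast_of_ne_nil (List.cons_ne_nil _ _)] at hlast
      have hteq : t.relabel (fun x : Empty => (x.elim : N))
          = (Term.var G.start :: l).getLast (List.cons_ne_nil _ _) := by
        injection hlast.symm
      show t.relabel (fun x : Empty => (x.elim : N)) ∈ ReachIn G.P (Term.var G.start) K
      rw [hteq]
      exact reachIn_mono (by simpa using hlen) hlastmem
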